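/- If G is a finite graph with χ(G) > 2 such that for every vertex v the graph G − v is 2-colorable, then χ(G) = 3 and G is an odd cycle. -/

import Mathlib

open Set

/-- An axis-parallel box in `ℝ^d`: a product of nonempty closed intervals. -/
def IsBoxIn (d : ℕ) (s : Set (Fin d → ℝ)) : Prop :=
  ∃ lo hi : Fin d → ℝ, (∀ i, lo i ≤ hi i) ∧
    s = {x | ∀ i, x i ∈ Set.Icc (lo i) (hi i)}

/-- A `p`-box in `ℝ^d`: a product of nonempty closed intervals, exactly `d - p`
of which are degenerate (single points). -/
def IsPBoxIn (p d : ℕ) (s : Set (Fin d → ℝ)) : Prop :=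
  ∃ lo hi : Fin d → ℝ, (∀ i, lo i ≤ hi i) ∧
    {i : Fin d | lo i = hi i}.ncard = d - p ∧
    s = {x | ∀ i, x i ∈ Set.Icc (lo i) (hi i)}

/-- A graph is an interval graph if it is the intersection graph of a family of
closed real intervals. -/
def IsIntervalGraph {V : Type*} (G : SimpleGraph V) : Prop :=
  ∃ a b : V → ℝ, (∀ v, a v ≤ b v) ∧
    ∀ u v : V, u ≠ v →
      (G.Adj u v ↔ (Set.Icc (a u) (b u) ∩ Set.Icc (a v) (b v)).Nonempty)

/-- `G` is the intersection graph of a family of `p`-boxes in `ℝ^d`. -/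
def RealizableAsPBoxes {V : Type*} (p d : ℕ) (G : SimpleGraph V) : Prop :=
  ∃ B : V → Set (Fin d → ℝ), (∀ v, IsPBoxIn p d (B v)) ∧
    ∀ u v : V, u ≠ v → (G.Adj u v ↔ (B u ∩ B v).Nonempty)

/-- `G` is the intersection graph of a family of (full) axis-parallel boxes in `ℝ^d`. -/
def RealizableAsBoxes {V : Type*} (d : ℕ) (G : SimpleGraph V) : Prop :=
  ∃ B : V → Set (Fin d → ℝ), (∀ v, IsBoxIn d (B v)) ∧
    ∀ u v : V, u ≠ v → (G.Adj u v ↔ (B u ∩ B v).Nonempty)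

/-- The intersection graph of a family of sets in `ℝ^d`. -/
def intersectionGraph {ι : Type*} {d : ℕ} (B : ι → Set (Fin d → ℝ)) : SimpleGraph ι :=
  SimpleGraph.fromRel fun i j => (B i ∩ B j).Nonempty

/-- The family `B` can be pierced by at most `n` points. -/
def Pierceable {ι : Type*} {d : ℕ} (B : ι → Set (Fin d → ℝ)) (n : ℕ) : Prop :=
  ∃ P : Finset (Fin d → ℝ), P.card ≤ n ∧ ∀ i, ∃ p ∈ P, p ∈ B i

/-- The subfamily of `B` indexed by `S` can be pierced by at most `n` points. -/
def PierceableOn {ι : Type*} {d : ℕ} (B : ι → Set (Fin d → ℝ)) (S : Finset ι) (n : ℕ) : Prop :=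
  ∃ P : Finset (Fin d → ℝ), P.card ≤ n ∧ ∀ i ∈ S, ∃ p ∈ P, p ∈ B i

/-- The cycle graph on `s` vertices, with vertex set `ZMod s`. -/
def cyc (s : ℕ) : SimpleGraph (ZMod s) := SimpleGraph.fromRel fun i j => j = i + 1

/-- The boxicity of a graph, as an extended natural number. -/
noncomputable def boxicity {V : Type*} (G : SimpleGraph V) : ℕ∞ :=
  sInf {n : ℕ∞ | ∃ k : ℕ, n = k ∧ RealizableAsBoxes k G}

/-- The `p`-boxicity of a graph: the least `d ≥ p` such that `G` is realizable as
`p`-boxes in `ℝ^d` (possibly `∞`). -/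
noncomputable def pboxicity {V : Type*} (p : ℕ) (G : SimpleGraph V) : ℕ∞ :=
  sInf {n : ℕ∞ | ∃ k : ℕ, n = k ∧ p ≤ k ∧ RealizableAsPBoxes p k G}


open SimpleGraph

/-- A walk between two `getVert`s of a walk, of the right length. -/
lemma walk_between {V : Type*} {G : SimpleGraph V} {u v : V} (p : G.Walk u v) :
    ∀ (a n : ℕ), a + n ≤ p.length →
      ∃ q : G.Walk (p.getVert a) (p.getVert (a + n)), q.length = n := by
  intro a n
  induction n generalizing a with
  | zero => intro _; exact ⟨SimpleGraph.Walk.nil, rfl⟩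
  | succ n ih =>
    intro h
    have ha : a < p.length := by omega
    have hadj := p.adj_getVert_succ ha
    obtain ⟨q, hq⟩ := ih (a + 1) (by omega)
    have heq : a + 1 + n = a + (n + 1) := by omega
    exact ⟨SimpleGraph.Walk.cons hadj (q.copy rfl (by rw [heq])), by simp [hq]⟩

lemma exists_odd_closed_walk {V : Type*} {G : SimpleGraph V} (h : ¬ G.Colorable 2) :
    ∃ (u : V) (w : G.Walk u u), Odd w.length := by
  by_contra hc
  push_neg at hc
  apply h
  classical
  let root : V → V := fun v => Quot.out (G.connectedComponentMk v)
  have hreach : ∀ v, G.Reachable (root v) v := fun v =>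
    SimpleGraph.ConnectedComponent.exact (Quot.out_eq _)
  let pw : ∀ v, G.Walk (root v) v := fun v => (hreach v).some
  have key : ∀ {x y : V}, G.Adj x y → ¬ (Even (pw x).length ↔ Even (pw y).length) := by
    intro x y hxy hiff
    have hroot : root y = root x := by
      simp only [root]
      rw [SimpleGraph.ConnectedComponent.sound hxy.symm.reachable]
    let q : G.Walk (root x) (root x) :=
      (pw x).append (SimpleGraph.Walk.cons hxy ((pw y).reverse.copy rfl hroot))
    have hlen : q.length = (pw x).length + 1 + (pw y).length := by
      simp [q]; omega
    have := hc (root x) q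
    rw [Nat.not_odd_iff_even, hlen] at this
    simp only [Nat.even_iff] at this hiff
    omega
  have c : G.Coloring Bool := SimpleGraph.Coloring.mk (fun v => decide (Even (pw v).length))
    (by intro x y hxy hd
        exact key hxy (by simpa [decide_eq_decide] using hd))
  simpa using c.colorable

lemma parity_of_avoiding_walk {V : Type*} {G : SimpleGraph V} {v : V}
    (c : (G.induce ({v}ᶜ : Set V)).Coloring Bool) {x y : V} (p : G.Walk x y)
    (hp : v ∉ p.support) (hx : x ∈ ({v}ᶜ : Set V)) (hy : y ∈ ({v}ᶜ : Set V)) :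
    Odd p.length ↔ ¬ (c ⟨x, hx⟩ = c ⟨y, hy⟩) := by
  induction p with
  | nil => simp
  | @cons x z y h q ih =>
    have hq : v ∉ q.support := fun hm => hp (by simp [hm])
    have hz : z ∈ ({v}ᶜ : Set V) := by
      have : v ≠ z := fun hvz => hq (hvz ▸ q.start_mem_support)
      simpa using this.symm
    have hxz : ¬ (c ⟨x, hx⟩ = c ⟨z, hz⟩) := by
      apply c.valid
      exact h
    have := ih hq hz hy
    rw [SimpleGraph.Walk.length_cons, Nat.odd_add_one]
    rw [this]
    generalize c ⟨x, hx⟩ = bx at *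
    generalize c ⟨z, hz⟩ = bz at *
    generalize c ⟨y, hy⟩ = by' at *
    cases bx <;> cases bz <;> cases by' <;> tauto


lemma cyc_adj {s : ℕ} {i j : ZMod s} : (cyc s).Adj i j ↔ i ≠ j ∧ (j = i + 1 ∨ i = j + 1) := by
  simp [cyc, SimpleGraph.fromRel_adj]

lemma cyc_colorable {s : ℕ} (hs : 3 ≤ s) : (cyc s).Colorable 3 := by
  haveI : NeZero s := ⟨by omega⟩
  haveI : Fact (1 < s) := ⟨by omega⟩
  have key : ∀ i j : ZMod s, j = i + 1 →
      (if i.val = s - 1 then (⟨2, by omega⟩ : Fin 3) else ⟨i.val % 2, by omega⟩) ≠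
      (if j.val = s - 1 then (⟨2, by omega⟩ : Fin 3) else ⟨j.val % 2, by omega⟩) := by
    intro i j hj
    have hiv : i.val < s := ZMod.val_lt i
    have hjv : j.val = (i.val + 1) % s := by
      rw [hj, ZMod.val_add, ZMod.val_one]
    by_cases h1 : i.val = s - 1
    · have hs' : i.val + 1 = s := by omega
      have hj0 : j.val = 0 := by rw [hjv, hs', Nat.mod_self]
      simp only [if_pos h1, hj0, if_neg (by omega : ¬ (0 : ℕ) = s - 1)]
      simp [Fin.ext_iff]
    · have hj1 : j.val = i.val + 1 := by rw [hjv]; exact Nat.mod_eq_of_lt (by omega)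
      simp only [hj1]
      by_cases h2 : i.val + 1 = s - 1
      · rw [if_neg h1, if_pos h2]; simp [Fin.ext_iff]; omega
      · rw [if_neg h1, if_neg h2]; simp [Fin.ext_iff]; omega
  exact ⟨SimpleGraph.Coloring.mk
    (fun i => if i.val = s - 1 then ⟨2, by omega⟩ else ⟨i.val % 2, by omega⟩) (by
      intro i j hadj
      rcases cyc_adj.mp hadj with ⟨hne, h | h⟩
      · exact key i j h
      · exact (key j i h).symm)⟩

/-- if `χ(G) > 2` but deleting any vertex makes `G` 2-colorable, then
`G` is an odd cycle with `χ(G) = 3`. -/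
theorem odd_cycle_of_vertex_critical {V : Type*} [Fintype V] (G : SimpleGraph V)
    (h2 : 2 < G.chromaticNumber)
    (hv : ∀ v : V, (G.induce ({v}ᶜ : Set V)).Colorable 2) :
    G.chromaticNumber = 3 ∧ ∃ s : ℕ, Odd s ∧ 3 ≤ s ∧ Nonempty (G ≃g cyc s) := by
  classical
  have hnc : ¬ G.Colorable 2 := fun h => absurd h.chromaticNumber_le (by
    exact not_le.mpr (by exact_mod_cast h2))
  obtain ⟨u0, w0, hodd0⟩ := exists_odd_closed_walk hnc
  set S : Set ℕ := {n | Odd n ∧ ∃ (x : V) (q : G.Walk x x), q.length = n} with hS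
  have hSne : w0.length ∈ S := ⟨hodd0, u0, w0, rfl⟩
  obtain ⟨hsodd, u, w, hw⟩ : sInf S ∈ S := Nat.sInf_mem ⟨_, hSne⟩
  set s := sInf S with hs
  have hmin : ∀ (x : V) (q : G.Walk x x), Odd q.length → s ≤ q.length := fun x q hq =>
    Nat.sInf_le ⟨hq, x, q, rfl⟩
  have hs3 : 3 ≤ s := by
    have hs1 : s ≠ 1 := by
      intro h1
      rw [h1] at hw
      cases w with
      | nil => simp at hw
      | @cons _ z _ h q =>
        have hq0 : q.length = 0 := by simp only [SimpleGraph.Walk.length_cons] at hw; omega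
        have := SimpleGraph.Walk.eq_of_length_eq_zero hq0
        subst this
        exact G.loopless.irrefl _ h
    rcases hsodd with ⟨k, hk⟩
    omega
  set f : ℕ → V := w.getVert with hf
  have hf0 : f 0 = u := w.getVert_zero
  have hfs : f s = u := by rw [hf, ← hw]; exact w.getVert_length
  have hwb : ∀ a n, a + n ≤ s → ∃ q : G.Walk (f a) (f (a+n)), q.length = n := by
    intro a n h
    exact walk_between w a n (by omega)
  -- injectivity
  have hinj : ∀ a b, a ≤ b → b ≤ s → f a = f b → a = b ∨ (a = 0 ∧ b = s) := by
    intro a b hab hbs hfab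
    by_contra hcon
    push_neg at hcon
    obtain ⟨q1, hq1⟩ := hwb a (b - a) (by omega)
    obtain ⟨q2a, hq2a⟩ := hwb 0 a (by omega)
    obtain ⟨q2b, hq2b⟩ := hwb b (s - b) (by omega)
    have e1 : f (a + (b - a)) = f a := by rw [show a + (b-a) = b by omega]; exact hfab.symm
    have e2 : f (b + (s - b)) = f 0 := by rw [show b + (s-b) = s by omega, hfs, hf0]
    let Q1 : G.Walk (f a) (f a) := q1.copy rfl e1
    let Q2 : G.Walk (f a) (f a) :=
      ((q2b.copy rfl e2).append (q2a.copy (by rw [hf0]) (by rw [show 0 + a = a by omega]))).copy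
        hfab.symm rfl
    have hQ1 : Q1.length = b - a := by simpa [Q1] using hq1
    have hQ2 : Q2.length = (s - b) + a := by simp [Q2, hq2b, hq2a]
    have hpar : Odd (b - a) ∨ Odd ((s - b) + a) := by
      rcases hsodd with ⟨k, hk⟩
      rcases Nat.even_or_odd (b - a) with he | ho
      · right; rcases he with ⟨m, hm⟩; exact ⟨k - m, by omega⟩
      · left; exact ho
    rcases hpar with ho | ho
    · have := hmin _ Q1 (hQ1 ▸ ho)
      rw [hQ1] at this
      omega
    · have := hmin _ Q2 (hQ2 ▸ ho)
      rw [hQ2] at this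
      omega
  -- every vertex is on the walk
  have hsupp : ∀ v : V, v ∈ w.support := by
    intro v
    by_contra hns
    obtain ⟨cc⟩ := hv v
    let c : (G.induce ({v}ᶜ : Set V)).Coloring Bool :=
      (G.induce ({v}ᶜ : Set V)).recolorOfEquiv finTwoEquiv cc
    have hu : u ∈ ({v}ᶜ : Set V) := by
      simp only [mem_compl_iff, mem_singleton_iff]
      rintro rfl
      exact hns w.start_mem_support
    have := (parity_of_avoiding_walk c w hns hu hu).mp (hw ▸ hsodd)
    exact this rfl
  -- consecutive adjacency
  have hadj_succ : ∀ a, a < s → G.Adj (f a) (f (a+1)) := fun a ha =>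
    w.adj_getVert_succ (by omega)
  -- no chords
  have hchord : ∀ a b, a < b → b < s → G.Adj (f a) (f b) →
      b = a + 1 ∨ (a = 0 ∧ b = s - 1) := by
    intro a b hab hbs hadj
    by_contra hcon
    push_neg at hcon
    obtain ⟨q1, hq1⟩ := hwb a (b - a) (by omega)
    obtain ⟨q2a, hq2a⟩ := hwb 0 a (by omega)
    obtain ⟨q2b, hq2b⟩ := hwb b (s - b) (by omega)
    have e1 : f (a + (b - a)) = f b := by rw [show a + (b-a) = b by omega]
    have e2 : f (b + (s - b)) = f 0 := by rw [show b + (s-b) = s by omega, hfs, hf0]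
    let Q1 : G.Walk (f a) (f a) := (q1.copy rfl e1).concat hadj.symm
    let Q2 : G.Walk (f b) (f b) :=
      (((q2b.copy rfl e2).append (q2a.copy (by rw [hf0]) (by rw [show 0 + a = a by omega]))).concat
        hadj)
    have hQ1 : Q1.length = (b - a) + 1 := by simp [Q1, hq1]
    have hQ2 : Q2.length = ((s - b) + a) + 1 := by simp [Q2, hq2b, hq2a]
    have hpar : Odd ((b - a) + 1) ∨ Odd ((s - b) + a + 1) := by
      rcases hsodd with ⟨k, hk⟩
      rcases Nat.even_or_odd ((b - a) + 1) with he | ho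
      · right; rcases he with ⟨m, hm⟩; exact ⟨k - m + 1, by omega⟩
      · left; exact ho
    rcases hpar with ho | ho
    · have := hmin _ Q1 (hQ1 ▸ ho)
      rw [hQ1] at this
      rcases hcon with ⟨h1, h2⟩
      have : b = s - 1 := by omega
      have : a = 0 := by omega
      exact (h2 ‹a = 0›) ‹b = s - 1›
    · have := hmin _ Q2 (hQ2 ▸ ho)
      rw [hQ2] at this
      exact hcon.1 (by omega)
  haveI : NeZero s := ⟨by omega⟩
  set g : ZMod s → V := fun i => f i.val with hg
  have hginj : Function.Injective g := by
    intro i j hij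
    have hiv : i.val < s := ZMod.val_lt i
    have hjv : j.val < s := ZMod.val_lt j
    have : i.val = j.val := by
      rcases le_total i.val j.val with h | h
      · rcases hinj _ _ h (by omega) hij with h' | h' <;> omega
      · rcases hinj _ _ h (by omega) hij.symm with h' | h' <;> omega
    exact ZMod.val_injective s this
  have hgsurj : Function.Surjective g := by
    intro v
    obtain ⟨n, hn, hns⟩ := SimpleGraph.Walk.mem_support_iff_exists_getVert.mp (hsupp v)
    rw [hw] at hns
    rcases Nat.lt_or_ge n s with h | h
    · exact ⟨(n : ZMod s), by rw [hg]; simp only; rw [ZMod.val_cast_of_lt h]; exact hn⟩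
    · have : n = s := by omega
      subst this
      exact ⟨0, by rw [hg]; simp only [ZMod.val_zero]; rw [hf0, ← hfs]; exact hn⟩
  -- adjacency characterization
  have hmapiff : ∀ i j : ZMod s, G.Adj (g i) (g j) ↔ (cyc s).Adj i j := by
    intro i j
    have hiv : i.val < s := ZMod.val_lt i
    have hjv : j.val < s := ZMod.val_lt j
    have hival : ((i.val : ℕ) : ZMod s) = i := ZMod.natCast_rightInverse i
    have hjval : ((j.val : ℕ) : ZMod s) = j := ZMod.natCast_rightInverse j
    constructor
    · intro hadj
      have hne : i ≠ j := fun h => G.loopless.irrefl _ (h ▸ hadj)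
      rw [cyc_adj]
      refine ⟨hne, ?_⟩
      have hvalne : i.val ≠ j.val := fun h => hne (ZMod.val_injective s h)
      rcases Nat.lt_or_ge i.val j.val with hlt | hge
      · rcases hchord _ _ hlt hjv hadj with h | ⟨h0, h1⟩
        · left
          rw [← hival, ← hjval, h]
          push_cast
          ring
        · right
          rw [← hival, ← hjval, h0, h1]
          have : ((s - 1 : ℕ) : ZMod s) + 1 = 0 := by
            push_cast [Nat.cast_sub (by omega : 1 ≤ s)]
            simp [ZMod.natCast_self]
          rw [this]
          simp
      · have hlt : j.val < i.val := by omega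
        rcases hchord _ _ hlt hiv hadj.symm with h | ⟨h0, h1⟩
        · right
          rw [← hival, ← hjval, h]
          push_cast
          ring
        · left
          rw [← hival, ← hjval, h0, h1]
          have : ((s - 1 : ℕ) : ZMod s) + 1 = 0 := by
            push_cast [Nat.cast_sub (by omega : 1 ≤ s)]
            simp [ZMod.natCast_self]
          rw [this]
          simp
    · intro hadj
      rw [cyc_adj] at hadj
      obtain ⟨hne, hc⟩ := hadj
      have key : ∀ i' j' : ZMod s, j' = i' + 1 → G.Adj (g i') (g j') := by
        intro i' j' hj'
        have hiv' : i'.val < s := ZMod.val_lt i'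
        have hjval' : j'.val = (i'.val + 1) % s := by
          rw [hj', ZMod.val_add]
          haveI : Fact (1 < s) := ⟨by omega⟩
          rw [ZMod.val_one]
        rcases Nat.lt_or_ge (i'.val + 1) s with h | h
        · have : j'.val = i'.val + 1 := by rw [hjval', Nat.mod_eq_of_lt h]
          rw [hg]; simp only; rw [this]
          exact hadj_succ _ hiv'
        · have hieq : i'.val = s - 1 := by omega
          have : j'.val = 0 := by rw [hjval', show i'.val + 1 = s by omega, Nat.mod_self]
          rw [hg]; simp only; rw [this, hieq]
          have := hadj_succ (s-1) (by omega)
          rw [show s - 1 + 1 = s by omega, hfs, ← hf0] at this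
          exact this
      rcases hc with h | h
      · exact key i j h
      · exact (key j i h).symm
  let e : ZMod s ≃ V := Equiv.ofBijective g ⟨hginj, hgsurj⟩
  have hiso : Nonempty (G ≃g cyc s) := by
    refine ⟨(SimpleGraph.Iso.symm ⟨e, ?_⟩ : G ≃g cyc s)⟩
    intro i j
    exact hmapiff i j
  have hodd : Odd s := hsodd
  have hchr : G.chromaticNumber = 3 := by
    apply le_antisymm
    · obtain ⟨iso⟩ := hiso
      have h3 : G.Colorable 3 := (cyc_colorable hs3).of_hom iso.toEmbedding.toHom
      exact_mod_cast h3.chromaticNumber_le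
    · exact SimpleGraph.Walk.three_le_chromaticNumber_of_odd_loop w (hw ▸ hsodd)
  exact ⟨hchr, s, hodd, hs3, hiso⟩
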